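/- Let ν be a μ-stationary probability measure on a G-space X and ξ a non-singular σ-finite measure on X with ν ≪ ξ. Define the information functions I_ν(g,x) = log(dg⁻¹ν/dν)(x) and I_ξ(g,x) = log(dg⁻¹ξ/dξ)(x). If both I_ν and I_ξ lie in L¹(G × X, μ ⊗ ν), then ∫_G ∫_X I_ν dν dμ = ∫_G ∫_X I_ξ dν dμ. -/

import Mathlib

open MeasureTheory Filter
open scoped ENNReal NNReal

/-- The support of a measure on a topological space. -/
def measureSupport {G : Type*} [TopologicalSpace G] [MeasurableSpace G]
    (μ : Measure G) : Set G :=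
  {g | ∀ U : Set G, IsOpen U → g ∈ U → 0 < μ U}

/-- Convolution powers of a measure on a group. -/
noncomputable def convPow {G : Type*} [Monoid G] [MeasurableSpace G]
    (μ : Measure G) : ℕ → Measure G
  | 0 => Measure.dirac 1
  | n + 1 => (convPow μ n).mconv μ

/-- Admissibility: the semigroup generated by the support is dense and some convolution
power is absolutely continuous with respect to the Haar measure. -/
def Admissible {G : Type*} [Group G] [TopologicalSpace G] [IsTopologicalGroup G]
    [LocallyCompactSpace G] [MeasurableSpace G] [BorelSpace G] (μ : Measure G) : Prop :=
  Dense (Submonoid.closure (measureSupport μ) : Set G) ∧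
    ∃ n : ℕ, 0 < n ∧ convPow μ n ≪ (Measure.haar : Measure G)

/-- The information function `I_ξ(g,x) = log (d g⁻¹ξ / dξ)(x)` of a measure `ξ` on a
`G`-space. -/
noncomputable def infoFun {G : Type*} [Group G] {X : Type*} [MeasurableSpace X]
    [MulAction G X] (ξ : Measure X) (g : G) (x : X) : ℝ :=
  Real.log (((Measure.map (g⁻¹ • ·) ξ).rnDeriv ξ x).toReal)

/-- Truncation of a real number at level `n`. -/
noncomputable def truncR (n : ℕ) (a : ℝ) : ℝ := max (min a n) (-(n : ℝ))

lemma truncR_abs_le (n : ℕ) (a : ℝ) : |truncR n a| ≤ n := by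
  rw [abs_le]
  exact ⟨le_max_right _ _, max_le ((min_le_right _ _)) (by simp)⟩

lemma abs_truncR_sub_truncR_le (n : ℕ) (a b : ℝ) :
    |truncR n a - truncR n b| ≤ |a - b| := by
  refine (abs_max_sub_max_le_abs _ _ _).trans ?_
  have := abs_min_sub_min_le_max a (n : ℝ) b (n : ℝ)
  simpa using this.trans (by simp [abs_nonneg])

lemma tendsto_truncR (a : ℝ) : Tendsto (fun n : ℕ => truncR n a) atTop (nhds a) := by
  have h : ∀ᶠ n : ℕ in atTop, truncR n a = a := by
    filter_upwards [eventually_ge_atTop (Nat.ceil |a|)] with n hn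
    have h1 : |a| ≤ (n : ℝ) := (Nat.ceil_le.mp hn).trans (le_refl _) |>.trans (by exact_mod_cast le_refl _)
    have ha1 : a ≤ (n : ℝ) := (le_abs_self a).trans h1
    have ha2 : -(n : ℝ) ≤ a := by
      have := (neg_abs_le a)
      linarith
    simp [truncR, min_eq_left ha1, max_eq_left ha2]
  exact Tendsto.congr' (h.mono fun n hn => hn.symm) tendsto_const_nhds
  
lemma measurable_truncR (n : ℕ) : Measurable (truncR n) :=
  (measurable_id.min measurable_const).max measurable_const


theorem map_smul_withDensity' {G X : Type*} [Group G] [MeasurableSpace G]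
    [MeasurableSpace X] [MulAction G X]
    (hsmul : Measurable fun p : G × X => p.1 • p.2)
    (ξ : Measure X) {h : X → ℝ≥0∞} (hh : Measurable h) (g : G) :
    Measure.map (g • ·) (ξ.withDensity h) =
      (Measure.map (g • ·) ξ).withDensity (fun x => h (g⁻¹ • x)) := by
  have hg : Measurable (fun x : X => g • x) :=
    hsmul.comp (measurable_const.prodMk measurable_id)
  have hginv : Measurable (fun x : X => g⁻¹ • x) :=
    hsmul.comp (measurable_const.prodMk measurable_id)
  ext A hA
  rw [Measure.map_apply hg hA, withDensity_apply _ (hg hA), withDensity_apply _ hA]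
  have := setLIntegral_map (μ := ξ) hA (hh.comp hginv) hg
  simp only [Function.comp] at this
  rw [this]
  refine setLIntegral_congr_fun (hg hA) (fun x _ => ?_)
  simp [inv_smul_smul]

theorem integral_cocycle_eq_zero' {G X : Type*} [Group G] [MeasurableSpace G]
    [MeasurableSpace X] [MulAction G X]
    (hsmul : Measurable fun p : G × X => p.1 • p.2)
    (μ : Measure G) [IsProbabilityMeasure μ] (ν : Measure X) [IsProbabilityMeasure ν]
    (hmapT : Measure.map (fun p : G × X => p.1 • p.2) (μ.prod ν) = ν)
    {φ : X → ℝ} (hφ : Measurable φ)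
    (hD : Integrable (fun p : G × X => φ (p.1 • p.2) - φ p.2) (μ.prod ν)) :
    ∫ p : G × X, (φ (p.1 • p.2) - φ p.2) ∂(μ.prod ν) = 0 := by
  have hφT : Measurable fun p : G × X => φ (p.1 • p.2) := hφ.comp hsmul
  have hφ2 : Measurable fun p : G × X => φ p.2 := hφ.comp measurable_snd
  have key : ∀ n : ℕ,
      ∫ p : G × X, (truncR n (φ (p.1 • p.2)) - truncR n (φ p.2)) ∂(μ.prod ν) = 0 := by
    intro n
    have hm1 : Measurable fun p : G × X => truncR n (φ (p.1 • p.2)) :=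
      (measurable_truncR n).comp hφT
    have hm2 : Measurable fun p : G × X => truncR n (φ p.2) :=
      (measurable_truncR n).comp hφ2
    have hbint : ∀ {f : G × X → ℝ}, Measurable f → (∀ p, |f p| ≤ n) →
        Integrable f (μ.prod ν) := fun hf hb =>
      (integrable_const (n : ℝ)).mono' hf.aestronglyMeasurable
        (ae_of_all _ fun p => by simpa [Real.norm_eq_abs] using hb p)
    have hmφ : Measurable (fun x => truncR n (φ x)) := (measurable_truncR n).comp hφ
    have h1 : ∫ p : G × X, truncR n (φ (p.1 • p.2)) ∂(μ.prod ν)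
        = ∫ x, truncR n (φ x) ∂ν := by
      conv_rhs => rw [← hmapT]
      rw [integral_map hsmul.aemeasurable
        hmφ.aestronglyMeasurable]
    have h2 : ∫ p : G × X, truncR n (φ p.2) ∂(μ.prod ν) = ∫ x, truncR n (φ x) ∂ν := by
      have h := (integral_map (measurable_snd (α := G) (β := X)).aemeasurable
        hmφ.aestronglyMeasurable (μ := μ.prod ν)).symm
      rw [h, Measure.map_snd_prod, measure_univ, one_smul]
    rw [integral_sub (hbint hm1 fun p => truncR_abs_le n _)
      (hbint hm2 fun p => truncR_abs_le n _), h1, h2, sub_self]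
  have htend : Tendsto
      (fun n : ℕ => ∫ p : G × X, (truncR n (φ (p.1 • p.2)) - truncR n (φ p.2)) ∂(μ.prod ν))
      atTop (nhds (∫ p : G × X, (φ (p.1 • p.2) - φ p.2) ∂(μ.prod ν))) := by
    refine tendsto_integral_of_dominated_convergence (fun p => |φ (p.1 • p.2) - φ p.2|)
      (fun n => (((measurable_truncR n).comp hφT).sub
        ((measurable_truncR n).comp hφ2)).aestronglyMeasurable)
      hD.abs (fun n => ae_of_all _ fun p => ?_) (ae_of_all _ fun p => ?_)
    · simpa [Real.norm_eq_abs] using abs_truncR_sub_truncR_le n (φ (p.1 • p.2)) (φ p.2)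
    · exact (tendsto_truncR _).sub (tendsto_truncR _)
  rw [funext key] at htend
  exact tendsto_nhds_unique htend tendsto_const_nhds


theorem key_identity' {G X : Type*} [Group G] [MeasurableSpace G]
    [MeasurableSpace X] [MulAction G X]
    (hsmul : Measurable fun p : G × X => p.1 • p.2)
    (ν : Measure X) [IsProbabilityMeasure ν] (ξ : Measure X) [SigmaFinite ξ]
    (hns : ∀ g : G, Measure.map (g • ·) ξ ≪ ξ ∧ ξ ≪ Measure.map (g • ·) ξ)
    (hac : ν ≪ ξ) (g : G)
    (hg0 : ν ((g • ·) ⁻¹' {x | ν.rnDeriv ξ x = 0}) = 0) :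
    ∀ᵐ x ∂ν, infoFun ν g x =
      infoFun ξ g x + Real.log ((ν.rnDeriv ξ (g • x)).toReal)
        - Real.log ((ν.rnDeriv ξ x).toReal) := by
  have hg1 : Measurable (fun x : X => g • x) :=
    hsmul.comp (measurable_const.prodMk measurable_id)
  have hg2 : Measurable (fun x : X => g⁻¹ • x) :=
    hsmul.comp (measurable_const.prodMk measurable_id)
  set u : X → ℝ≥0∞ := ν.rnDeriv ξ with hu
  have hum : Measurable u := Measure.measurable_rnDeriv ν ξ
  set η : Measure X := Measure.map (g⁻¹ • ·) ξ with hηdef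
  let e : X ≃ᵐ X :=
    { toFun := fun x => g⁻¹ • x, invFun := fun x => g • x,
      left_inv := fun x => smul_inv_smul g x,
      right_inv := fun x => inv_smul_smul g x,
      measurable_toFun := hg2, measurable_invFun := hg1 }
  haveI : SigmaFinite η := by
    rw [hηdef, show ((g⁻¹ • ·) : X → X) = ⇑e from rfl]
    exact e.sigmaFinite_map
  set r : X → ℝ≥0∞ := η.rnDeriv ξ with hr
  have hrm : Measurable r := Measure.measurable_rnDeriv η ξ
  have hηξ : η ≪ ξ := (hns g⁻¹).1
  have hξη : ξ ≪ η := (hns g⁻¹).2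
  have hνd : ξ.withDensity u = ν := Measure.withDensity_rnDeriv_eq ν ξ hac
  have hηd : ξ.withDensity r = η := Measure.withDensity_rnDeriv_eq η ξ hηξ
  set s : Set X := {x | u x = 0} with hsdef
  have hs : MeasurableSet s := hum (measurableSet_singleton 0)
  have hupos : ∀ᵐ x ∂ν, 0 < u x := Measure.rnDeriv_pos hac
  have hνs : ν s = 0 := by
    have h := hupos
    rw [ae_iff] at h
    refine measure_mono_null (fun x hx => ?_) h
    simp only [hsdef, Set.mem_setOf_eq] at hx ⊢
    simp [hx]
  set f : X → ℝ≥0∞ := fun x => r x * u (g • x) with hf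
  have hfm : Measurable f := hrm.mul (hum.comp hg1)
  set F : X → ℝ≥0∞ := fun x => (u x)⁻¹ * Set.indicator sᶜ f x with hF
  have hFm : Measurable F := hum.inv.mul (hfm.indicator hs.compl)
  have hug : Measurable (fun x => u (g • x)) := hum.comp hg1
  have hmapν : Measure.map (g⁻¹ • ·) ν = ξ.withDensity f := by
    conv_lhs => rw [← hνd]
    rw [map_smul_withDensity' hsmul ξ hum g⁻¹]
    simp only [inv_inv]
    rw [← hηdef, ← hηd, ← withDensity_mul _ hrm hug]
    rfl
  have h2' : ν.withDensity F = ξ.withDensity (Set.indicator sᶜ f) := by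
    conv_lhs => rw [← hνd]
    rw [← withDensity_mul _ hum hFm]
    refine withDensity_congr_ae ?_
    filter_upwards [Measure.rnDeriv_lt_top ν ξ] with x hx
    by_cases hxs : x ∈ s
    · have hxc : x ∉ sᶜ := by simpa using hxs
      simp [hF, Pi.mul_apply, Set.indicator_of_notMem hxc]
    · have hxc : x ∈ sᶜ := by simpa using hxs
      have h0 : u x ≠ 0 := by simpa [hsdef] using hxs
      simp only [Pi.mul_apply, hF, Set.indicator_of_mem hxc]
      rw [← mul_assoc, ENNReal.mul_inv_cancel h0 hx.ne, one_mul]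
  have hsum : Set.indicator s f + Set.indicator sᶜ f = f := Set.indicator_self_add_compl s f
  have hadd : Measure.map (g⁻¹ • ·) ν
      = ξ.withDensity (Set.indicator s f) + ν.withDensity F := by
    rw [hmapν, h2', ← withDensity_add_left (hfm.indicator hs), hsum]
  have hsing : ξ.withDensity (Set.indicator s f) ⟂ₘ ν := by
    refine ⟨sᶜ, hs.compl, ?_, by rwa [compl_compl]⟩
    rw [withDensity_apply _ hs.compl]
    rw [setLIntegral_congr_fun hs.compl
      (fun x (hx : x ∈ sᶜ) => Set.indicator_of_notMem (fun h => hx h) f)]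
    simp
  have hrd : F =ᵐ[ν] (Measure.map (g⁻¹ • ·) ν).rnDeriv ν :=
    Measure.eq_rnDeriv hFm hsing hadd
  have hult : ∀ᵐ x ∂ν, u x < ∞ := hac.ae_le (Measure.rnDeriv_lt_top ν ξ)
  have hrpos : ∀ᵐ x ∂ν, 0 < r x := hac.ae_le (hξη.ae_le (Measure.rnDeriv_pos hηξ))
  have hrlt : ∀ᵐ x ∂ν, r x < ∞ := hac.ae_le (Measure.rnDeriv_lt_top η ξ)
  have hugpos : ∀ᵐ x ∂ν, u (g • x) ≠ 0 := by
    rw [ae_iff]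
    refine measure_mono_null (fun x hx => ?_) hg0
    simpa [hsdef] using hx
  have huglt : ∀ᵐ x ∂ν, u (g • x) ≠ ∞ := by
    have hm : MeasurableSet {x : X | u x = ∞} := hum (measurableSet_singleton ∞)
    have hξtop : ξ {x | u x = ∞} = 0 := by
      have h := Measure.rnDeriv_lt_top ν ξ
      rw [ae_iff] at h
      refine measure_mono_null (fun x hx => ?_) h
      simp only [Set.mem_setOf_eq, not_lt, top_le_iff, ← hu] at hx ⊢
      exact hx
    have hmapac : Measure.map (g • ·) ν ≪ ξ := (hac.map hg1).trans (hns g).1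
    have h0 : ν ((g • ·) ⁻¹' {x | u x = ∞}) = 0 := by
      rw [← Measure.map_apply hg1 hm]
      exact hmapac hξtop
    rw [ae_iff]
    refine measure_mono_null (fun x hx => ?_) h0
    simpa using hx
  filter_upwards [hrd, hupos, hult, hrpos, hrlt, hugpos, huglt]
    with x hFx hupx hux hrpx hrx hgp hgt
  have hxc : x ∈ sᶜ := by simp [hsdef, hupx.ne']
  have hFval : F x = (u x)⁻¹ * (r x * u (g • x)) := by
    simp [hF, hf, Set.indicator_of_mem hxc]
  have hIν : infoFun ν g x = Real.log ((F x).toReal) := by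
    rw [infoFun, ← hFx]
  have hu0 : (u x).toReal ≠ 0 := ENNReal.toReal_ne_zero.mpr ⟨hupx.ne', hux.ne⟩
  have hr0 : (r x).toReal ≠ 0 := ENNReal.toReal_ne_zero.mpr ⟨hrpx.ne', hrx.ne⟩
  have hug0 : (u (g • x)).toReal ≠ 0 := ENNReal.toReal_ne_zero.mpr ⟨hgp, hgt⟩
  have hIξ : infoFun ξ g x = Real.log ((r x).toReal) := rfl
  rw [hIν, hFval, ENNReal.toReal_mul, ENNReal.toReal_mul, ENNReal.toReal_inv,
    Real.log_mul (inv_ne_zero hu0) (mul_ne_zero hr0 hug0), Real.log_mul hr0 hug0,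
    Real.log_inv, hIξ]
  ring

/-- If `ν` is a `μ`-stationary probability measure, `ξ` a non-singular σ-finite measure
with `ν ≪ ξ`, and both information functions `I_ν`, `I_ξ` are integrable with respect to
`μ ⊗ ν`, then their averaged integrals agree. -/
theorem integral_infoFun_eq_of_absolutelyContinuous
    {G : Type*} [Group G] [TopologicalSpace G] [IsTopologicalGroup G]
    [LocallyCompactSpace G] [SecondCountableTopology G]
    [MeasurableSpace G] [BorelSpace G]
    {X : Type*} [MeasurableSpace X] [StandardBorelSpace X] [MulAction G X]
    (hsmul : Measurable fun p : G × X => p.1 • p.2)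
    (μ : Measure G) [IsProbabilityMeasure μ] (hμ : Admissible μ)
    (ν : Measure X) [IsProbabilityMeasure ν]
    (hstat : ∀ A : Set X, MeasurableSet A → ν A = ∫⁻ g, ν ((g • ·) ⁻¹' A) ∂μ)
    (ξ : Measure X) [SigmaFinite ξ]
    (hns : ∀ g : G, Measure.map (g • ·) ξ ≪ ξ ∧ ξ ≪ Measure.map (g • ·) ξ)
    (hac : ν ≪ ξ)
    (hIν : Integrable (fun p : G × X => infoFun ν p.1 p.2) (μ.prod ν))
    (hIξ : Integrable (fun p : G × X => infoFun ξ p.1 p.2) (μ.prod ν)) :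
    ∫ g, ∫ x, infoFun ν g x ∂ν ∂μ = ∫ g, ∫ x, infoFun ξ g x ∂ν ∂μ := by
  set u : X → ℝ≥0∞ := ν.rnDeriv ξ with hu
  have hum : Measurable u := Measure.measurable_rnDeriv ν ξ
  set φ : X → ℝ := fun x => Real.log ((u x).toReal) with hφdef
  have hφm : Measurable φ := Real.measurable_log.comp hum.ennreal_toReal
  have hmapT : Measure.map (fun p : G × X => p.1 • p.2) (μ.prod ν) = ν := by
    ext A hA
    rw [Measure.map_apply hsmul hA, Measure.prod_apply (hsmul hA), hstat A hA]
    rfl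
  set s : Set X := {x | u x = 0} with hsdef
  have hs : MeasurableSet s := hum (measurableSet_singleton 0)
  have hνs : ν s = 0 := by
    have h := Measure.rnDeriv_pos hac
    rw [ae_iff] at h
    refine measure_mono_null (fun x hx => ?_) h
    simp only [hsdef, Set.mem_setOf_eq, ← hu] at hx ⊢
    simp [hx]
  have hgood : ∀ᵐ g ∂μ, ν ((g • ·) ⁻¹' s) = 0 := by
    have hmeas : Measurable fun g : G => ν ((g • ·) ⁻¹' s) :=
      measurable_measure_prodMk_left (hsmul hs)
    have h0 : ∫⁻ g, ν ((g • ·) ⁻¹' s) ∂μ = 0 := (hstat s hs).symm.trans hνs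
    have h := (lintegral_eq_zero_iff hmeas).mp h0
    filter_upwards [h] with g hg using hg
  have hkey : ∀ᵐ g ∂μ, ∀ᵐ x ∂ν, infoFun ν g x = infoFun ξ g x + φ (g • x) - φ x := by
    filter_upwards [hgood] with g hg
    exact key_identity' hsmul ν ξ hns hac g hg
  set D : G × X → ℝ := fun p => φ (p.1 • p.2) - φ p.2 with hDdef
  have hDm : Measurable D := (hφm.comp hsmul).sub (hφm.comp measurable_snd)
  have hIνg : ∀ᵐ g ∂μ, Integrable (fun x => infoFun ν g x) ν := hIν.prod_right_ae
  have hIξg : ∀ᵐ g ∂μ, Integrable (fun x => infoFun ξ g x) ν := hIξ.prod_right_ae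
  have hDint : Integrable D (μ.prod ν) := by
    refine ⟨hDm.aestronglyMeasurable, ?_⟩
    have hlt : ∫⁻ p, (‖D p‖₊ : ℝ≥0∞) ∂(μ.prod ν) < ∞ := by
      rw [lintegral_prod (fun p => (‖D p‖₊ : ℝ≥0∞)) hDm.enorm.aemeasurable]
      have hb : ∫⁻ g, ∫⁻ x, (‖D (g, x)‖₊ : ℝ≥0∞) ∂ν ∂μ ≤
          ∫⁻ g, ∫⁻ x, ((‖infoFun ν g x‖₊ : ℝ≥0∞) + (‖infoFun ξ g x‖₊ : ℝ≥0∞)) ∂ν ∂μ := by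
        refine lintegral_mono_ae ?_
        filter_upwards [hkey] with g hg
        have heq : ∫⁻ x, (‖D (g, x)‖₊ : ℝ≥0∞) ∂ν
            = ∫⁻ x, (‖infoFun ν g x - infoFun ξ g x‖₊ : ℝ≥0∞) ∂ν := by
          refine lintegral_congr_ae ?_
          filter_upwards [hg] with x hx
          have : D (g, x) = infoFun ν g x - infoFun ξ g x := by
            simp only [hDdef]; linarith
          rw [this]
        rw [heq]
        refine lintegral_mono fun x => ?_
        calc ((‖infoFun ν g x - infoFun ξ g x‖₊ : ℝ≥0∞))
            ≤ ((‖infoFun ν g x‖₊ + ‖infoFun ξ g x‖₊ : ℝ≥0) : ℝ≥0∞) :=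
              ENNReal.coe_le_coe.2 (nnnorm_sub_le _ _)
          _ = _ := by rw [ENNReal.coe_add]
      refine lt_of_le_of_lt hb ?_
      have haem : AEMeasurable
          (fun p : G × X => (‖infoFun ν p.1 p.2‖₊ : ℝ≥0∞) + (‖infoFun ξ p.1 p.2‖₊ : ℝ≥0∞))
          (μ.prod ν) := hIν.aestronglyMeasurable.enorm.add hIξ.aestronglyMeasurable.enorm
      have := (lintegral_prod _ haem).symm
      rw [this, lintegral_add_left' (f := fun p : G × X => (‖infoFun ν p.1 p.2‖₊ : ℝ≥0∞))
        hIν.aestronglyMeasurable.enorm _]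
      exact ENNReal.add_lt_top.2 ⟨hIν.2, hIξ.2⟩
    exact hlt
  have hzero : ∫ p, D p ∂(μ.prod ν) = 0 := integral_cocycle_eq_zero' hsmul μ ν hmapT hφm hDint
  have hint_prod : ∫ p, D p ∂(μ.prod ν) = ∫ g, ∫ x, D (g, x) ∂ν ∂μ := integral_prod D hDint
  have hinner : ∀ᵐ g ∂μ,
      ∫ x, infoFun ν g x ∂ν - ∫ x, infoFun ξ g x ∂ν = ∫ x, D (g, x) ∂ν := by
    filter_upwards [hkey, hIνg, hIξg] with g hg hgν hgξ
    rw [← integral_sub hgν hgξ]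
    refine integral_congr_ae ?_
    filter_upwards [hg] with x hx
    simp only [hDdef]
    linarith
  have hsub : ∫ g, ∫ x, infoFun ν g x ∂ν ∂μ - ∫ g, ∫ x, infoFun ξ g x ∂ν ∂μ = 0 := by
    rw [← integral_sub hIν.integral_prod_left hIξ.integral_prod_left,
      integral_congr_ae hinner, ← hint_prod, hzero]
  linarith
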